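/- Consider the 5-simplex on vertices {1,...,6} and the Pachner move 2–4 configurations: the left side consists of the two pentachora L = {12345, 12346} with interior tetrahedron 1234, the right side of the four pentachora R = {12356, 12456, 13456, 23456} with interior tetrahedra {1256, 1356, 1456, 2356, 2456, 3456}, and the common boundary tetrahedra are B = {2345, 1345, 1245, 1235, 2346, 1346, 1246, 1236}. A permitted ℤ-coloring of a side is an assignment (x_t, y_t) ∈ ℤ × ℤ to every tetrahedron t that is a face of its pentachora, such that 𝐲_u = ℛ𝐱_u for each pentachoron u of that side. Then the restriction to B of permitted colorings of the left side is injective, its image equals the image of the restriction to B of permitted colorings of the right side, and for each boundary value in this image the set of permitted colorings of the right side restricting to it is in bijection with ℤ (one additional ℤ-degree of freedom). -/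

import Mathlib

/- The Pachner move 2–4 inside the 5-simplex with vertex set `Fin 6`
   (vertices 1,…,6 of the paper are 0,…,5 here). -/

/-- The matrix ℛ from the paper. -/
def Rmat : Matrix (Fin 5) (Fin 5) ℤ :=
  !![0, -2, 1, 1, -2;
     0, -1, 0, 1, -1;
     -1, 2, -2, 0, 1;
     -1, 3, -2, -1, 2;
     0, 1, -1, 0, 0]

/-- The five tetrahedral faces `jklm, iklm, ijlm, ijkm, ijkl` of the
pentachoron `ijklm = abcde`. -/
def pentFaces (a b c d e : Fin 6) : Fin 5 → Finset (Fin 6) :=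
  ![{b, c, d, e}, {a, c, d, e}, {a, b, d, e}, {a, b, c, e}, {a, b, c, d}]

/-- A ℤ-coloring `t ↦ (x_t, y_t)` is permitted on the pentachoron `abcde`
iff `𝐲_u = ℛ 𝐱_u`, where ℛ acts with integer coefficients. -/
def IsPermitted (f : Finset (Fin 6) → ℤ × ℤ) (a b c d e : Fin 6) : Prop :=
  ∀ i : Fin 5,
    (f (pentFaces a b c d e i)).2 =
      ∑ j : Fin 5, Rmat i j * (f (pentFaces a b c d e j)).1

/-- Permitted coloring of the left side of the move 2–4: the pentachora
`12345, 12346`. -/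
def PermittedLeft (f : Finset (Fin 6) → ℤ × ℤ) : Prop :=
  IsPermitted f 0 1 2 3 4 ∧ IsPermitted f 0 1 2 3 5

/-- Permitted coloring of the right side of the move 2–4: the pentachora
`12356, 12456, 13456, 23456`. -/
def PermittedRight (f : Finset (Fin 6) → ℤ × ℤ) : Prop :=
  IsPermitted f 0 1 2 4 5 ∧ IsPermitted f 0 1 3 4 5 ∧
    IsPermitted f 0 2 3 4 5 ∧ IsPermitted f 1 2 3 4 5

/-- The common boundary tetrahedra
`B = {2345, 1345, 1245, 1235, 2346, 1346, 1246, 1236}`. -/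
def Bdry : Finset (Finset (Fin 6)) :=
  {{1, 2, 3, 4}, {0, 2, 3, 4}, {0, 1, 3, 4}, {0, 1, 2, 4},
   {1, 2, 3, 5}, {0, 2, 3, 5}, {0, 1, 3, 5}, {0, 1, 2, 5}}

/-- The tetrahedra that are faces of the left-side pentachora: the boundary
ones together with the interior tetrahedron `1234`. -/
def FacesLeft : Finset (Finset (Fin 6)) :=
  Bdry ∪ {{0, 1, 2, 3}}

/-- The tetrahedra that are faces of the right-side pentachora: the boundary
ones together with the interior tetrahedra `1256, 1356, 1456, 2356, 2456, 3456`. -/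
def FacesRight : Finset (Finset (Fin 6)) :=
  Bdry ∪ {{0, 1, 4, 5}, {0, 2, 4, 5}, {0, 3, 4, 5},
          {1, 2, 4, 5}, {1, 3, 4, 5}, {2, 3, 4, 5}}

/-- The set of permitted colorings of the right side (an assignment to every
tetrahedron that is a face of the right-side pentachora, encoded as a function
vanishing outside `FacesRight`) whose restriction to the boundary `B` is `b`. -/
def RightFiber (b : Finset (Fin 6) → ℤ × ℤ) : Set (Finset (Fin 6) → ℤ × ℤ) :=
  {f | (∀ t ∉ FacesRight, f t = 0) ∧ PermittedRight f ∧ ∀ t ∈ Bdry, f t = b t}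

def Hb (b : Finset (Fin 6) → ℤ × ℤ) (m : ℤ) : Finset (Fin 6) → ℤ × ℤ := fun t =>
  if t ∈ Bdry then b t
  else if t = {0, 1, 4, 5} then (-m - (b {0, 1, 2, 4}).1 - (b {0, 1, 2, 4}).2 + (b {0, 1, 2, 5}).1 + (b {0, 1, 2, 5}).2, m)
  else if t = {0, 2, 4, 5} then (-m - (b {0, 1, 2, 4}).1 + (b {0, 1, 2, 5}).1 + (b {0, 1, 2, 5}).2, m - (b {0, 1, 2, 5}).2)
  else if t = {0, 3, 4, 5} then (-m + (b {0, 1, 3, 4}).2 - (b {0, 1, 2, 4}).1 - (b {0, 1, 2, 4}).2 + (b {0, 1, 2, 5}).1 + (b {0, 1, 2, 5}).2, m - (b {0, 1, 3, 5}).2)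
  else if t = {1, 2, 4, 5} then (-m + (b {0, 1, 2, 4}).1 + 2 * (b {0, 1, 2, 4}).2, m - (b {0, 1, 2, 4}).1 - (b {0, 1, 2, 4}).2 - (b {0, 1, 2, 5}).2)
  else if t = {1, 3, 4, 5} then (-m + (b {0, 1, 3, 4}).2 + (b {0, 1, 2, 4}).1 + (b {0, 1, 2, 4}).2 + (b {0, 1, 3, 5}).1 + (b {0, 1, 3, 5}).2 - (b {0, 1, 2, 5}).1 - (b {0, 1, 2, 5}).2, m - (b {0, 1, 2, 4}).1 - (b {0, 1, 2, 4}).2 - (b {0, 1, 3, 5}).1 - 2 * (b {0, 1, 3, 5}).2 + (b {0, 1, 2, 5}).1 + (b {0, 1, 2, 5}).2)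
  else if t = {2, 3, 4, 5} then (-m + (b {0, 1, 3, 4}).2 + (b {0, 1, 2, 4}).1 - (b {0, 1, 2, 4}).2 + (b {0, 2, 3, 5}).1 + (b {0, 1, 3, 5}).2 - (b {0, 1, 2, 5}).1, m - (b {0, 1, 2, 4}).1 - (b {0, 2, 3, 5}).1 - 2 * (b {0, 1, 3, 5}).2 + (b {0, 1, 2, 5}).1 + (b {0, 1, 2, 5}).2)
  else 0

def Gb (b : Finset (Fin 6) → ℤ × ℤ) : Finset (Fin 6) → ℤ × ℤ := fun t =>
  if t ∈ Bdry then b t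
  else if t = {0, 1, 2, 3} then (-(b {0, 2, 3, 5}).1 - (b {0, 1, 3, 5}).2 + (b {0, 1, 2, 5}).1 + (b {0, 1, 2, 5}).2, (b {0, 2, 3, 5}).1 - (b {0, 1, 3, 5}).1)
  else 0

lemma memB0 : (({1, 2, 3, 4} : Finset (Fin 6)) ∈ Bdry) = True := by decide
lemma memB1 : (({0, 2, 3, 4} : Finset (Fin 6)) ∈ Bdry) = True := by decide
lemma memB2 : (({0, 1, 3, 4} : Finset (Fin 6)) ∈ Bdry) = True := by decide
lemma memB3 : (({0, 1, 2, 4} : Finset (Fin 6)) ∈ Bdry) = True := by decide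
lemma memB4 : (({1, 2, 3, 5} : Finset (Fin 6)) ∈ Bdry) = True := by decide
lemma memB5 : (({0, 2, 3, 5} : Finset (Fin 6)) ∈ Bdry) = True := by decide
lemma memB6 : (({0, 1, 3, 5} : Finset (Fin 6)) ∈ Bdry) = True := by decide
lemma memB7 : (({0, 1, 2, 5} : Finset (Fin 6)) ∈ Bdry) = True := by decide
lemma nmemB0 : (({0, 1, 4, 5} : Finset (Fin 6)) ∈ Bdry) = False := by decide
lemma nmemB1 : (({0, 2, 4, 5} : Finset (Fin 6)) ∈ Bdry) = False := by decide
lemma nmemB2 : (({0, 3, 4, 5} : Finset (Fin 6)) ∈ Bdry) = False := by decide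
lemma nmemB3 : (({1, 2, 4, 5} : Finset (Fin 6)) ∈ Bdry) = False := by decide
lemma nmemB4 : (({1, 3, 4, 5} : Finset (Fin 6)) ∈ Bdry) = False := by decide
lemma nmemB5 : (({2, 3, 4, 5} : Finset (Fin 6)) ∈ Bdry) = False := by decide
lemma nmemB6 : (({0, 1, 2, 3} : Finset (Fin 6)) ∈ Bdry) = False := by decide
lemma ne0 : (({0, 2, 4, 5} : Finset (Fin 6)) = {0, 1, 4, 5}) = False := by decide
lemma ne1 : (({0, 3, 4, 5} : Finset (Fin 6)) = {0, 1, 4, 5}) = False := by decide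
lemma ne2 : (({0, 3, 4, 5} : Finset (Fin 6)) = {0, 2, 4, 5}) = False := by decide
lemma ne3 : (({1, 2, 4, 5} : Finset (Fin 6)) = {0, 1, 4, 5}) = False := by decide
lemma ne4 : (({1, 2, 4, 5} : Finset (Fin 6)) = {0, 2, 4, 5}) = False := by decide
lemma ne5 : (({1, 2, 4, 5} : Finset (Fin 6)) = {0, 3, 4, 5}) = False := by decide
lemma ne6 : (({1, 3, 4, 5} : Finset (Fin 6)) = {0, 1, 4, 5}) = False := by decide
lemma ne7 : (({1, 3, 4, 5} : Finset (Fin 6)) = {0, 2, 4, 5}) = False := by decide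
lemma ne8 : (({1, 3, 4, 5} : Finset (Fin 6)) = {0, 3, 4, 5}) = False := by decide
lemma ne9 : (({1, 3, 4, 5} : Finset (Fin 6)) = {1, 2, 4, 5}) = False := by decide
lemma ne10 : (({2, 3, 4, 5} : Finset (Fin 6)) = {0, 1, 4, 5}) = False := by decide
lemma ne11 : (({2, 3, 4, 5} : Finset (Fin 6)) = {0, 2, 4, 5}) = False := by decide
lemma ne12 : (({2, 3, 4, 5} : Finset (Fin 6)) = {0, 3, 4, 5}) = False := by decide
lemma ne13 : (({2, 3, 4, 5} : Finset (Fin 6)) = {1, 2, 4, 5}) = False := by decide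
lemma ne14 : (({2, 3, 4, 5} : Finset (Fin 6)) = {1, 3, 4, 5}) = False := by decide


set_option maxHeartbeats 1000000

lemma leftInterior (f : Finset (Fin 6) → ℤ × ℤ) (hf : PermittedLeft f) :
    f {0, 1, 2, 3} = (-(f {0, 2, 3, 5}).1 - (f {0, 1, 3, 5}).2 + (f {0, 1, 2, 5}).1 + (f {0, 1, 2, 5}).2,
      (f {0, 2, 3, 5}).1 - (f {0, 1, 3, 5}).1) := by
  have a0 := hf.1 (0 : Fin 5)
  have a1 := hf.1 (1 : Fin 5)
  have a2 := hf.1 (2 : Fin 5)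
  have a3 := hf.1 (3 : Fin 5)
  have a4 := hf.1 (4 : Fin 5)
  have a5 := hf.2 (0 : Fin 5)
  have a6 := hf.2 (1 : Fin 5)
  have a7 := hf.2 (2 : Fin 5)
  have a8 := hf.2 (3 : Fin 5)
  have a9 := hf.2 (4 : Fin 5)
  simp [pentFaces, Rmat, Fin.sum_univ_five] at a0 a1 a2 a3 a4 a5 a6 a7 a8 a9
  rw [Prod.ext_iff]
  refine ⟨?_, ?_⟩ <;> simp <;> linarith

lemma Hb_bdry (b : Finset (Fin 6) → ℤ × ℤ) (m : ℤ) : ∀ t ∈ Bdry, Hb b m t = b t := by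
  intro t ht
  simp only [Hb]
  rw [if_pos ht]

lemma Gb_bdry (b : Finset (Fin 6) → ℤ × ℤ) : ∀ t ∈ Bdry, Gb b t = b t := by
  intro t ht
  simp only [Gb]
  rw [if_pos ht]

lemma Hb_outside (b : Finset (Fin 6) → ℤ × ℤ) (m : ℤ) : ∀ t ∉ FacesRight, Hb b m t = 0 := by
  intro t ht
  have h0 : t ∉ Bdry := fun h => ht (Finset.mem_union_left _ h)
  have k0 : t ≠ {0, 1, 4, 5} := by rintro rfl; exact ht (by decide)
  have k1 : t ≠ {0, 2, 4, 5} := by rintro rfl; exact ht (by decide)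
  have k2 : t ≠ {0, 3, 4, 5} := by rintro rfl; exact ht (by decide)
  have k3 : t ≠ {1, 2, 4, 5} := by rintro rfl; exact ht (by decide)
  have k4 : t ≠ {1, 3, 4, 5} := by rintro rfl; exact ht (by decide)
  have k5 : t ≠ {2, 3, 4, 5} := by rintro rfl; exact ht (by decide)
  simp only [Hb, if_neg h0, if_neg k0, if_neg k1, if_neg k2, if_neg k3, if_neg k4, if_neg k5]

lemma rightOfLeft (b f : Finset (Fin 6) → ℤ × ℤ) (hf : PermittedLeft f)
    (h_b : ∀ t ∈ Bdry, f t = b t) (m : ℤ) : PermittedRight (Hb b m) := by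
  have eb0 : f ({1, 2, 3, 4} : Finset (Fin 6)) = b {1, 2, 3, 4} := h_b _ (by decide)
  have eb1 : f ({0, 2, 3, 4} : Finset (Fin 6)) = b {0, 2, 3, 4} := h_b _ (by decide)
  have eb2 : f ({0, 1, 3, 4} : Finset (Fin 6)) = b {0, 1, 3, 4} := h_b _ (by decide)
  have eb3 : f ({0, 1, 2, 4} : Finset (Fin 6)) = b {0, 1, 2, 4} := h_b _ (by decide)
  have eb4 : f ({1, 2, 3, 5} : Finset (Fin 6)) = b {1, 2, 3, 5} := h_b _ (by decide)
  have eb5 : f ({0, 2, 3, 5} : Finset (Fin 6)) = b {0, 2, 3, 5} := h_b _ (by decide)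
  have eb6 : f ({0, 1, 3, 5} : Finset (Fin 6)) = b {0, 1, 3, 5} := h_b _ (by decide)
  have eb7 : f ({0, 1, 2, 5} : Finset (Fin 6)) = b {0, 1, 2, 5} := h_b _ (by decide)
  have a0 := hf.1 (0 : Fin 5)
  have a1 := hf.1 (1 : Fin 5)
  have a2 := hf.1 (2 : Fin 5)
  have a3 := hf.1 (3 : Fin 5)
  have a4 := hf.1 (4 : Fin 5)
  have a5 := hf.2 (0 : Fin 5)
  have a6 := hf.2 (1 : Fin 5)
  have a7 := hf.2 (2 : Fin 5)
  have a8 := hf.2 (3 : Fin 5)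
  have a9 := hf.2 (4 : Fin 5)
  simp [pentFaces, Rmat, Fin.sum_univ_five, eb0, eb1, eb2, eb3, eb4, eb5, eb6, eb7] at a0 a1 a2 a3 a4 a5 a6 a7 a8 a9
  refine ⟨?_, ?_, ?_, ?_⟩ <;>
    · intro i
      fin_cases i <;>
        · simp [Hb, pentFaces, Rmat, Fin.sum_univ_five, memB0, memB1, memB2, memB3, memB4, memB5, memB6, memB7, nmemB0, nmemB1, nmemB2, nmemB3, nmemB4, nmemB5, nmemB6, ne0, ne1, ne2, ne3, ne4, ne5, ne6, ne7, ne8, ne9, ne10, ne11, ne12, ne13, ne14]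
          all_goals linarith

lemma leftOfRight (b g : Finset (Fin 6) → ℤ × ℤ) (hg : PermittedRight g)
    (h_b : ∀ t ∈ Bdry, g t = b t) : PermittedLeft (Gb b) := by
  have eb0 : g ({1, 2, 3, 4} : Finset (Fin 6)) = b {1, 2, 3, 4} := h_b _ (by decide)
  have eb1 : g ({0, 2, 3, 4} : Finset (Fin 6)) = b {0, 2, 3, 4} := h_b _ (by decide)
  have eb2 : g ({0, 1, 3, 4} : Finset (Fin 6)) = b {0, 1, 3, 4} := h_b _ (by decide)
  have eb3 : g ({0, 1, 2, 4} : Finset (Fin 6)) = b {0, 1, 2, 4} := h_b _ (by decide)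
  have eb4 : g ({1, 2, 3, 5} : Finset (Fin 6)) = b {1, 2, 3, 5} := h_b _ (by decide)
  have eb5 : g ({0, 2, 3, 5} : Finset (Fin 6)) = b {0, 2, 3, 5} := h_b _ (by decide)
  have eb6 : g ({0, 1, 3, 5} : Finset (Fin 6)) = b {0, 1, 3, 5} := h_b _ (by decide)
  have eb7 : g ({0, 1, 2, 5} : Finset (Fin 6)) = b {0, 1, 2, 5} := h_b _ (by decide)
  have c0 := hg.1 (0 : Fin 5)
  have c1 := hg.1 (1 : Fin 5)
  have c2 := hg.1 (2 : Fin 5)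
  have c3 := hg.1 (3 : Fin 5)
  have c4 := hg.1 (4 : Fin 5)
  have c5 := hg.2.1 (0 : Fin 5)
  have c6 := hg.2.1 (1 : Fin 5)
  have c7 := hg.2.1 (2 : Fin 5)
  have c8 := hg.2.1 (3 : Fin 5)
  have c9 := hg.2.1 (4 : Fin 5)
  have c10 := hg.2.2.1 (0 : Fin 5)
  have c11 := hg.2.2.1 (1 : Fin 5)
  have c12 := hg.2.2.1 (2 : Fin 5)
  have c13 := hg.2.2.1 (3 : Fin 5)
  have c14 := hg.2.2.1 (4 : Fin 5)
  have c15 := hg.2.2.2 (0 : Fin 5)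
  have c16 := hg.2.2.2 (1 : Fin 5)
  have c17 := hg.2.2.2 (2 : Fin 5)
  have c18 := hg.2.2.2 (3 : Fin 5)
  have c19 := hg.2.2.2 (4 : Fin 5)
  simp [pentFaces, Rmat, Fin.sum_univ_five, eb0, eb1, eb2, eb3, eb4, eb5, eb6, eb7] at c0 c1 c2 c3 c4 c5 c6 c7 c8 c9 c10 c11 c12 c13 c14 c15 c16 c17 c18 c19
  refine ⟨?_, ?_⟩ <;>
    · intro i
      fin_cases i <;>
        · simp [Gb, pentFaces, Rmat, Fin.sum_univ_five, memB0, memB1, memB2, memB3, memB4, memB5, memB6, memB7, nmemB0, nmemB1, nmemB2, nmemB3, nmemB4, nmemB5, nmemB6, ne0, ne1, ne2, ne3, ne4, ne5, ne6, ne7, ne8, ne9, ne10, ne11, ne12, ne13, ne14]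
          linarith

lemma rightUnique (b g : Finset (Fin 6) → ℤ × ℤ) (hg : PermittedRight g)
    (h_b : ∀ t ∈ Bdry, g t = b t) (h0 : ∀ t ∉ FacesRight, g t = 0) :
    g = Hb b ((g {0, 1, 4, 5}).2) := by
  have eb0 : g ({1, 2, 3, 4} : Finset (Fin 6)) = b {1, 2, 3, 4} := h_b _ (by decide)
  have eb1 : g ({0, 2, 3, 4} : Finset (Fin 6)) = b {0, 2, 3, 4} := h_b _ (by decide)
  have eb2 : g ({0, 1, 3, 4} : Finset (Fin 6)) = b {0, 1, 3, 4} := h_b _ (by decide)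
  have eb3 : g ({0, 1, 2, 4} : Finset (Fin 6)) = b {0, 1, 2, 4} := h_b _ (by decide)
  have eb4 : g ({1, 2, 3, 5} : Finset (Fin 6)) = b {1, 2, 3, 5} := h_b _ (by decide)
  have eb5 : g ({0, 2, 3, 5} : Finset (Fin 6)) = b {0, 2, 3, 5} := h_b _ (by decide)
  have eb6 : g ({0, 1, 3, 5} : Finset (Fin 6)) = b {0, 1, 3, 5} := h_b _ (by decide)
  have eb7 : g ({0, 1, 2, 5} : Finset (Fin 6)) = b {0, 1, 2, 5} := h_b _ (by decide)
  have c0 := hg.1 (0 : Fin 5)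
  have c1 := hg.1 (1 : Fin 5)
  have c2 := hg.1 (2 : Fin 5)
  have c3 := hg.1 (3 : Fin 5)
  have c4 := hg.1 (4 : Fin 5)
  have c5 := hg.2.1 (0 : Fin 5)
  have c6 := hg.2.1 (1 : Fin 5)
  have c7 := hg.2.1 (2 : Fin 5)
  have c8 := hg.2.1 (3 : Fin 5)
  have c9 := hg.2.1 (4 : Fin 5)
  have c10 := hg.2.2.1 (0 : Fin 5)
  have c11 := hg.2.2.1 (1 : Fin 5)
  have c12 := hg.2.2.1 (2 : Fin 5)
  have c13 := hg.2.2.1 (3 : Fin 5)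
  have c14 := hg.2.2.1 (4 : Fin 5)
  have c15 := hg.2.2.2 (0 : Fin 5)
  have c16 := hg.2.2.2 (1 : Fin 5)
  have c17 := hg.2.2.2 (2 : Fin 5)
  have c18 := hg.2.2.2 (3 : Fin 5)
  have c19 := hg.2.2.2 (4 : Fin 5)
  simp [pentFaces, Rmat, Fin.sum_univ_five, eb0, eb1, eb2, eb3, eb4, eb5, eb6, eb7] at c0 c1 c2 c3 c4 c5 c6 c7 c8 c9 c10 c11 c12 c13 c14 c15 c16 c17 c18 c19
  funext t
  by_cases hT : t ∈ FacesRight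
  · simp only [FacesRight, Bdry, Finset.mem_union, Finset.mem_insert, Finset.mem_singleton] at hT
    rcases hT with ((rfl|rfl|rfl|rfl|rfl|rfl|rfl|rfl)|(rfl|rfl|rfl|rfl|rfl|rfl)) <;>
      · simp [Hb, memB0, memB1, memB2, memB3, memB4, memB5, memB6, memB7, nmemB0, nmemB1, nmemB2, nmemB3, nmemB4, nmemB5, nmemB6, ne0, ne1, ne2, ne3, ne4, ne5, ne6, ne7, ne8, ne9, ne10, ne11, ne12, ne13, ne14]
        first
          | exact h_b _ (by decide)
          | (rw [Prod.ext_iff]; refine ⟨?_, ?_⟩ <;> simp <;> linarith)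
  · rw [h0 t hT, Hb_outside b _ t hT]

/-- For the Pachner move 2–4: restriction to the boundary `B` is injective on
permitted colorings of the left side; its image equals the image of the
restriction to `B` of permitted colorings of the right side; and for each
boundary value in this image, the set of permitted colorings of the right side
restricting to it is in bijection with ℤ (one additional ℤ-degree of freedom). -/
theorem pachner_two_four :
    (∀ f g : Finset (Fin 6) → ℤ × ℤ, PermittedLeft f → PermittedLeft g →
      (∀ t ∈ Bdry, f t = g t) → ∀ t ∈ FacesLeft, f t = g t) ∧
    (∀ b : Finset (Fin 6) → ℤ × ℤ,
      (∃ f, PermittedLeft f ∧ ∀ t ∈ Bdry, f t = b t) ↔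
      (∃ f, PermittedRight f ∧ ∀ t ∈ Bdry, f t = b t)) ∧
    (∀ b : Finset (Fin 6) → ℤ × ℤ,
      (∃ f, PermittedLeft f ∧ ∀ t ∈ Bdry, f t = b t) →
      Nonempty (RightFiber b ≃ ℤ)) := by
  refine ⟨?_, ?_, ?_⟩
  · intro f g hf hg hfg t ht
    simp only [FacesLeft, Finset.mem_union, Finset.mem_singleton] at ht
    rcases ht with ht | rfl
    · exact hfg t ht
    · rw [leftInterior f hf, leftInterior g hg,
        hfg _ (by decide : ({0, 2, 3, 5} : Finset (Fin 6)) ∈ Bdry),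
        hfg _ (by decide : ({0, 1, 3, 5} : Finset (Fin 6)) ∈ Bdry),
        hfg _ (by decide : ({0, 1, 2, 5} : Finset (Fin 6)) ∈ Bdry)]
  · intro b
    constructor
    · rintro ⟨f, hf, hfb⟩
      exact ⟨Hb b 0, rightOfLeft b f hf hfb 0, Hb_bdry b 0⟩
    · rintro ⟨g, hg, hgb⟩
      exact ⟨Gb b, leftOfRight b g hg hgb, Gb_bdry b⟩
  · rintro b ⟨f, hf, hfb⟩
    refine ⟨{
      toFun := fun g => (g.1 {0, 1, 4, 5}).2
      invFun := fun m => ⟨Hb b m, Hb_outside b m, rightOfLeft b f hf hfb m, Hb_bdry b m⟩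
      left_inv := ?_
      right_inv := ?_ }⟩
    · rintro ⟨g, hg0, hg, hgb⟩
      exact Subtype.ext (rightUnique b g hg hgb hg0).symm
    · intro m
      show (Hb b m {0, 1, 4, 5}).2 = m
      simp [Hb, nmemB0]
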